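/- arXiv:2506.13572 — 2 statements merged into one kernel-verified Lean document; each statement's English description precedes it below -/
import Mathlib

section
/- Let P be a finite Γ-colored poset satisfying EC, NA, AC, and ICE2. For distinct colors b, c ∈ Γ, integers m ≥ 1, and q > p ≥ 0, the alternating operator identity ∑_{k=0}^{q} (-1)^k ⟨c^{q-k}⟩∘⟨b^p⟩∘⟨c^k⟩ = 0 holds on m-tuples of order ideals of P. -/
open scoped Classical

/-- The set of ideals obtainable from the ideal `I` by adding a minimal element of the
complementary filter of color `a`. -/
noncomputable def addSet {P Γ : Type} [Fintype P] [PartialOrder P] [DecidableEq P]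
    (κ : P → Γ) (a : Γ) (I : Finset P) : Finset (Finset P) :=
  (Finset.univ.filter (fun x : P => κ x = a ∧ x ∉ I ∧
    IsLowerSet ((insert x I : Finset P) : Set P))).image (fun x => insert x I)

/-- The raising operator `X_a` applied to a single `m`-tuple of ideals: add a minimal
element of color `a` of the complementary filter to one coordinate, summed over all
coordinates and all such elements. -/
noncomputable def XaT {P Γ : Type} [Fintype P] [PartialOrder P] [DecidableEq P]
    (κ : P → Γ) {m : ℕ} (a : Γ) (T : Fin m → Finset P) : (Fin m → Finset P) →₀ ℚ :=
  ∑ j : Fin m,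
    ((addSet κ a (T j)).val.map (fun J => Finsupp.single (Function.update T j J) (1 : ℚ))).sum

/-- The linear extension of `X_a` to formal `ℚ`-linear combinations of `m`-tuples. -/
noncomputable def XvT {P Γ : Type} [Fintype P] [PartialOrder P] [DecidableEq P]
    (κ : P → Γ) {m : ℕ} (a : Γ) (v : (Fin m → Finset P) →₀ ℚ) : (Fin m → Finset P) →₀ ℚ :=
  v.sum (fun T c => c • XaT κ a T)

/-- The divided power operator `⟨a^k⟩ = X_a^k / k!` on `m`-tuples of ideals. -/
noncomputable def opPowT {P Γ : Type} [Fintype P] [PartialOrder P] [DecidableEq P]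
    (κ : P → Γ) {m : ℕ} (a : Γ) (k : ℕ) (v : (Fin m → Finset P) →₀ ℚ) :
    (Fin m → Finset P) →₀ ℚ :=
  ((k.factorial : ℚ)⁻¹) • (XvT κ a)^[k] v

/-! ### Abstract ring lemmas: iterated inner derivations and the Serre-type identity -/

section RingLemmas

open Finset

variable {R : Type*} [Ring R]

/-- the inner derivation -/
def dd (a : R) (x : R) : R := a * x - x * a

lemma dd_zero (a : R) : dd a 0 = 0 := by simp [dd]

lemma dd_one (a : R) : dd a 1 = 0 := by simp [dd]

lemma dd_sum (a : R) {ι : Type*} (s : Finset ι) (f : ι → R) :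
    dd a (∑ i ∈ s, f i) = ∑ i ∈ s, dd a (f i) := by
  simp only [dd, Finset.mul_sum, Finset.sum_mul, ← Finset.sum_sub_distrib]

lemma dd_mul (a x y : R) : dd a (x * y) = x * dd a y + dd a x * y := by
  simp only [dd]; noncomm_ring

lemma dd_natCast_mul (a : R) (n : ℕ) (x : R) : dd a ((n : R) * x) = (n : R) * dd a x := by
  simp only [dd, mul_sub]
  congr 1
  · rw [← mul_assoc, ← (Nat.cast_commute n a).eq, mul_assoc]
  · rw [mul_assoc]

lemma dd_iter_zero (a : R) (n : ℕ) : (dd a)^[n] 0 = 0 := by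
  induction n with
  | zero => rfl
  | succ n ih => rw [Function.iterate_succ_apply, dd_zero, ih]

lemma binom_recomb (n : ℕ) (A B : ℕ → R) :
    ∑ i ∈ range (n+1), (n.choose i : R) * (A i * B (n-i+1))
      + ∑ i ∈ range (n+1), (n.choose i : R) * (A (i+1) * B (n-i))
    = ∑ i ∈ range (n+1+1), ((n+1).choose i : R) * (A i * B (n+1-i)) := by
  rw [Finset.sum_range_succ' (fun i => ((n+1).choose i : R) * (A i * B (n+1-i))) (n+1)]
  rw [Finset.sum_range_succ' (fun i => (n.choose i : R) * (A i * B (n-i+1))) n]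
  simp only [Nat.succ_sub_succ, Nat.choose_zero_right, Nat.cast_one, one_mul, Nat.sub_zero]
  have pascal : ∀ i ∈ range (n+1), ((n+1).choose (i+1) : R) * (A (i+1) * B (n-i))
      = (n.choose i : R) * (A (i+1) * B (n-i)) + (n.choose (i+1) : R) * (A (i+1) * B (n-i)) := by
    intro i _
    rw [Nat.choose_succ_succ, Nat.cast_add, add_mul]
  rw [Finset.sum_congr rfl pascal, Finset.sum_add_distrib]
  have htrunc : ∑ i ∈ range (n+1), (n.choose (i+1) : R) * (A (i+1) * B (n-i))
      = ∑ i ∈ range n, (n.choose (i+1) : R) * (A (i+1) * B (n-i)) := by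
    rw [Finset.sum_range_succ]; simp
  rw [htrunc]
  have hidx : ∀ i ∈ range n, (n.choose (i+1) : R) * (A (i+1) * B (n-(i+1)+1))
      = (n.choose (i+1) : R) * (A (i+1) * B (n-i)) := by
    intro i hi
    rw [Finset.mem_range] at hi
    congr 3
    omega
  rw [Finset.sum_congr rfl hidx]
  abel

/-- iterated Leibniz rule -/
lemma dd_iter_mul (a : R) (n : ℕ) (x y : R) :
    (dd a)^[n] (x * y)
      = ∑ i ∈ range (n + 1), (n.choose i : R) * ((dd a)^[i] x * (dd a)^[n - i] y) := by
  induction n with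
  | zero => simp
  | succ n ih =>
    rw [Function.iterate_succ_apply', ih, dd_sum]
    have step : ∀ i, dd a ((n.choose i : R) * ((dd a)^[i] x * (dd a)^[n - i] y))
        = (n.choose i : R) * ((dd a)^[i] x * (dd a)^[n - i + 1] y)
          + (n.choose i : R) * ((dd a)^[i + 1] x * (dd a)^[n - i] y) := by
      intro i
      rw [dd_natCast_mul, dd_mul, mul_add]
      rw [← Function.iterate_succ_apply' (dd a) (n - i) y,
        ← Function.iterate_succ_apply' (dd a) i x]
    simp only [step]
    rw [Finset.sum_add_distrib]
    exact binom_recomb n (fun i => (dd a)^[i] x) (fun k => (dd a)^[k] y)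

lemma dd_iter_b (a b : R) (h : dd a (dd a b) = 0) {r : ℕ} (hr : 2 ≤ r) :
    (dd a)^[r] b = 0 := by
  obtain ⟨s, rfl⟩ : ∃ s, r = s + 2 := ⟨r - 2, by omega⟩
  rw [Function.iterate_add_apply]
  have : (dd a)^[2] b = 0 := by
    rw [show (2:ℕ) = 1 + 1 from rfl, Function.iterate_add_apply]
    simpa using h
  rw [this, dd_iter_zero]

lemma dd_iter_pow (a b : R) (h : dd a (dd a b) = 0) :
    ∀ (p q : ℕ), p < q → (dd a)^[q] (b ^ p) = 0 := by
  intro p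
  induction p with
  | zero =>
    intro q hq
    obtain ⟨s, rfl⟩ : ∃ s, q = s + 1 := ⟨q - 1, by omega⟩
    rw [Function.iterate_add_apply, pow_zero]
    simp [dd_one, dd_iter_zero]
  | succ p ih =>
    intro q hq
    rw [pow_succ', dd_iter_mul]
    apply Finset.sum_eq_zero
    intro i hi
    rcases le_or_gt 2 i with h2 | h2
    · rw [dd_iter_b a b h h2, zero_mul, mul_zero]
    · rw [ih (q - i) (by omega), mul_zero, mul_zero]

/-- expansion of iterated inner derivation -/
lemma dd_iter_eq_sum (a x : R) (q : ℕ) :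
    (dd a)^[q] x
      = ∑ k ∈ range (q+1), (-1:R)^k * (q.choose k : R) * (a^(q-k) * x * a^k) := by
  induction q with
  | zero => simp
  | succ q ih =>
    rw [Function.iterate_succ_apply', ih, dd_sum]
    have hterm : ∀ k ∈ range (q+1),
        dd a ((-1:R)^k * (q.choose k : R) * (a^(q-k) * x * a^k))
          = (-1:R)^k * (q.choose k : R) * (a^(q-k+1) * x * a^k)
            - (-1:R)^k * (q.choose k : R) * (a^(q-k) * x * a^(k+1)) := by
      intro k _
      have hc : Commute a ((-1:R)^k * (q.choose k : R)) := by
        refine Commute.mul_right ?_ (Nat.cast_commute _ _).symm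
        exact (Commute.neg_one_right a).pow_right k
      have h1 : dd a (a^(q-k) * x * a^k)
          = a^(q-k+1) * x * a^k - a^(q-k) * x * a^(k+1) := by
        simp only [dd]
        rw [pow_succ' a (q-k), pow_succ a k]
        noncomm_ring
      have h0 : dd a ((-1:R)^k * (q.choose k : R) * (a^(q-k) * x * a^k))
          = (-1:R)^k * (q.choose k : R) * dd a (a^(q-k) * x * a^k) := by
        simp only [dd, mul_sub]
        rw [← mul_assoc a, hc.eq, mul_assoc, mul_assoc, mul_assoc, mul_assoc]
      rw [h0, h1, mul_sub]
    rw [Finset.sum_congr rfl hterm, Finset.sum_sub_distrib]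
    have hU : ∑ k ∈ range (q+1), (-1:R)^k * (q.choose k : R) * (a^(q-k+1) * x * a^k)
        = (∑ k ∈ range q, -((-1:R)^k * (q.choose (k+1) : R) * (a^(q-k) * x * a^(k+1))))
          + a^(q+1) * x := by
      rw [Finset.sum_range_succ' (fun k => (-1:R)^k * (q.choose k : R) * (a^(q-k+1) * x * a^k)) q]
      congr 1
      · refine Finset.sum_congr rfl (fun k hk => ?_)
        rw [Finset.mem_range] at hk
        have h2 : q - (k+1) + 1 = q - k := by omega
        rw [h2, pow_succ, mul_neg_one, neg_mul, neg_mul]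
      · simp
    have hT : ∑ k ∈ range (q+1+1), (-1:R)^k * ((q+1).choose k : R) * (a^(q+1-k) * x * a^k)
        = (∑ k ∈ range (q+1), -((-1:R)^k * ((q.choose k : R) + (q.choose (k+1) : R))
              * (a^(q-k) * x * a^(k+1))))
          + a^(q+1) * x := by
      rw [Finset.sum_range_succ' (fun k => (-1:R)^k * ((q+1).choose k : R) * (a^(q+1-k) * x * a^k)) (q+1)]
      congr 1
      · refine Finset.sum_congr rfl (fun k hk => ?_)
        have h2 : q + 1 - (k+1) = q - k := by omega
        rw [h2, Nat.choose_succ_succ, Nat.succ_eq_add_one, Nat.cast_add, pow_succ,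
          mul_neg_one, neg_mul, neg_mul]
      · simp
    rw [hT, hU]
    have hsplit : ∑ k ∈ range (q+1), -((-1:R)^k * ((q.choose k : R) + (q.choose (k+1) : R))
              * (a^(q-k) * x * a^(k+1)))
        = (∑ k ∈ range (q+1), -((-1:R)^k * (q.choose (k+1) : R) * (a^(q-k) * x * a^(k+1))))
          - ∑ k ∈ range (q+1), (-1:R)^k * (q.choose k : R) * (a^(q-k) * x * a^(k+1)) := by
      rw [← Finset.sum_sub_distrib]
      refine Finset.sum_congr rfl (fun k _ => ?_)
      noncomm_ring
    rw [hsplit]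
    have htrunc : ∑ k ∈ range (q+1), -((-1:R)^k * (q.choose (k+1) : R) * (a^(q-k) * x * a^(k+1)))
        = ∑ k ∈ range q, -((-1:R)^k * (q.choose (k+1) : R) * (a^(q-k) * x * a^(k+1))) := by
      rw [Finset.sum_range_succ]
      simp
    rw [htrunc]
    abel

lemma dd_sum_left {ι : Type*} (s : Finset ι) (y : ι → R) (w : R) :
    dd (∑ j ∈ s, y j) w = ∑ j ∈ s, dd (y j) w := by
  simp only [dd, Finset.sum_mul, Finset.mul_sum, ← Finset.sum_sub_distrib]

lemma dd_of_commute {x w : R} (h : Commute x w) : dd x w = 0 := by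
  rw [dd, h.eq, sub_self]

lemma serre_ring (a b : R) (h : dd a (dd a b) = 0) {p q : ℕ} (hpq : p < q) :
    ∑ k ∈ range (q+1), (-1:R)^k * (q.choose k : R) * (a^(q-k) * b^p * a^k) = 0 := by
  rw [← dd_iter_eq_sum a (b^p) q, dd_iter_pow a b h p q hpq]

lemma bracket_zero {ι : Type*} (s : Finset ι) (y z : ι → R)
    (hyy : ∀ i j, i ≠ j → Commute (y i) (y j))
    (hyz : ∀ i j, i ≠ j → Commute (y i) (z j))
    (h2 : ∀ j, y j * y j = 0) (h3 : ∀ j, y j * z j * y j = 0) :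
    dd (∑ j ∈ s, y j) (dd (∑ j ∈ s, y j) (∑ j ∈ s, z j)) = 0 := by
  have hin : dd (∑ j ∈ s, y j) (∑ j ∈ s, z j) = ∑ j ∈ s, dd (y j) (z j) := by
    rw [dd_sum]
    refine Finset.sum_congr rfl (fun j hj => ?_)
    rw [dd_sum_left]
    refine Finset.sum_eq_single_of_mem j hj (fun i hi hij => ?_)
    exact dd_of_commute (hyz i j hij)
  rw [hin, dd_sum]
  refine Finset.sum_eq_zero (fun j hj => ?_)
  rw [dd_sum_left]
  refine Finset.sum_eq_zero (fun i hi => ?_)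
  rcases eq_or_ne i j with rfl | hij
  · have e1 : y i * (y i * z i) = 0 := by rw [← mul_assoc, h2, zero_mul]
    have e2 : y i * (z i * y i) = 0 := by rw [← mul_assoc, h3]
    have e3 : y i * z i * y i = 0 := h3 i
    have e4 : z i * y i * y i = 0 := by rw [mul_assoc, h2, mul_zero]
    simp only [dd, mul_sub, sub_mul, e1, e2, e3, e4]
    abel
  · refine dd_of_commute ?_
    refine Commute.sub_right ?_ ?_
    · exact (hyy i j hij).mul_right (hyz i j hij)
    · exact (hyz i j hij).mul_right (hyy i j hij)

end RingLemmas

/-! ### Combinatorial key lemma -/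

section Comb

variable {P Γ : Type} [Fintype P] [PartialOrder P] [DecidableEq P]
variable (G : SimpleGraph Γ) (κ : P → Γ)

lemma mem_addSet_iff {a : Γ} {I K : Finset P} :
    K ∈ addSet κ a I ↔ ∃ x : P, (κ x = a ∧ x ∉ I ∧
      IsLowerSet ((insert x I : Finset P) : Set P)) ∧ insert x I = K := by
  simp [addSet]

/-- Key combinatorial vanishing: after adding a `c`-colored element `x₁` to a lower
set `I`, and possibly at most one further element of other colors, no further
`c`-colored element can be added. -/
lemma addSet_eq_empty
    (hEC : ∀ x y : P, κ x = κ y → x ≤ y ∨ y ≤ x)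
    (hICE2 : ∀ x y : P, κ x = κ y → x < y →
      (∀ z : P, κ z = κ x → ¬ (x < z ∧ z < y)) →
      (Finset.univ.filter (fun z : P => x < z ∧ z < y ∧ G.Adj (κ z) (κ x))).card = 2)
    (c : Γ) (I : Finset P) (hI : IsLowerSet (↑I : Set P))
    (x1 : P) (hx1c : κ x1 = c) (hx1I : x1 ∉ I)
    (hJ1 : IsLowerSet ((insert x1 I : Finset P) : Set P))
    (J : Finset P) (hsub : insert x1 I ⊆ J) (hcard : (J \ insert x1 I).card ≤ 1)
    (hcol : ∀ w ∈ J \ insert x1 I, κ w ≠ c) :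
    addSet κ c J = ∅ := by
  rw [Finset.eq_empty_iff_forall_notMem]
  intro K hK
  rw [mem_addSet_iff] at hK
  obtain ⟨x2, ⟨hx2c, hx2J, hx2low⟩, -⟩ := hK
  have hx1J : x1 ∈ J := hsub (Finset.mem_insert_self x1 I)
  have hne : x1 ≠ x2 := fun h => hx2J (h ▸ hx1J)
  have hlt : x1 < x2 := by
    rcases hEC x1 x2 (by rw [hx1c, hx2c]) with h | h
    · exact lt_of_le_of_ne h hne
    · exfalso
      have : x2 ∈ (insert x1 I : Finset P) := by
        have := hJ1 (a := x1) (b := x2) h (by simp)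
        exact_mod_cast this
      exact hx2J (hsub this)
  have hbetween : ∀ z : P, x1 < z → z < x2 → z ∈ J \ insert x1 I := by
    intro z h1 h2
    have hzJ' : z ∈ (insert x2 J : Finset P) := by
      have := hx2low (a := x2) (b := z) h2.le (by simp)
      exact_mod_cast this
    have hzJ : z ∈ J := by
      rcases Finset.mem_insert.mp hzJ' with h | h
      · exact absurd h (ne_of_lt h2)
      · exact h
    refine Finset.mem_sdiff.mpr ⟨hzJ, fun hz => ?_⟩
    rcases Finset.mem_insert.mp hz with h | h
    · exact absurd h (ne_of_gt h1)
    · exact hx1I (hI h1.le h)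
  have hnoc : ∀ z : P, κ z = κ x1 → ¬ (x1 < z ∧ z < x2) := by
    rintro z hz ⟨h1, h2⟩
    exact hcol z (hbetween z h1 h2) (by rw [hz, hx1c])
  have hcard2 := hICE2 x1 x2 (by rw [hx1c, hx2c]) hlt hnoc
  have hsubset : (Finset.univ.filter (fun z : P => x1 < z ∧ z < x2 ∧ G.Adj (κ z) (κ x1)))
      ⊆ J \ insert x1 I := by
    intro z hz
    rw [Finset.mem_filter] at hz
    exact hbetween z hz.2.1 hz.2.2.1
  have := Finset.card_le_card hsubset
  omega

end Comb

/-! ### Linear-algebra plumbing -/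

section Plumb

variable {P Γ : Type} [Fintype P] [PartialOrder P] [DecidableEq P] (κ : P → Γ) {m : ℕ}

/-- single-coordinate raising operator on a tuple -/
noncomputable def YaT (a : Γ) (j : Fin m) (T : Fin m → Finset P) : (Fin m → Finset P) →₀ ℚ :=
  ∑ J ∈ addSet κ a (T j), Finsupp.single (Function.update T j J) (1 : ℚ)

lemma YaT_def (a : Γ) (j : Fin m) (T : Fin m → Finset P) :
    YaT κ a j T = ∑ J ∈ addSet κ a (T j), Finsupp.single (Function.update T j J) (1 : ℚ) := rfl

lemma XaT_eq_sum (a : Γ) (T : Fin m → Finset P) : XaT κ a T = ∑ j, YaT κ a j T := rfl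

/-- single-coordinate raising operator, linearized -/
noncomputable def Ylin (a : Γ) (j : Fin m) :
    ((Fin m → Finset P) →₀ ℚ) →ₗ[ℚ] ((Fin m → Finset P) →₀ ℚ) :=
  Finsupp.lsum ℚ (fun T => (LinearMap.id : ℚ →ₗ[ℚ] ℚ).smulRight (YaT κ a j T))

noncomputable def Xlin (a : Γ) :
    ((Fin m → Finset P) →₀ ℚ) →ₗ[ℚ] ((Fin m → Finset P) →₀ ℚ) :=
  Finsupp.lsum ℚ (fun T => (LinearMap.id : ℚ →ₗ[ℚ] ℚ).smulRight (XaT κ a T))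

lemma Xlin_apply (a : Γ) (v : (Fin m → Finset P) →₀ ℚ) : Xlin κ a v = XvT κ a v := rfl

lemma Ylin_single (a : Γ) (j : Fin m) (T : Fin m → Finset P) (r : ℚ) :
    Ylin κ a j (Finsupp.single T r) = r • YaT κ a j T := by
  simp [Ylin]

lemma Xlin_eq_sum (a : Γ) : Xlin κ (m := m) a = ∑ j, Ylin κ a j := by
  apply Finsupp.lhom_ext
  intro T r
  simp [Xlin, Ylin, XaT_eq_sum, Finset.smul_sum]

def Low : Set (Fin m → Finset P) := {T | ∀ j, IsLowerSet (↑(T j) : Set P)}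

lemma update_mem_Low {a : Γ} {T : Fin m → Finset P} (hT : T ∈ Low (P := P))
    {j : Fin m} {J : Finset P} (hJ : J ∈ addSet κ a (T j)) :
    Function.update T j J ∈ Low (P := P) := by
  intro i
  rcases eq_or_ne i j with rfl | hij
  · rw [Function.update_self]
    obtain ⟨x, ⟨-, -, hlow⟩, rfl⟩ := (mem_addSet_iff κ).mp hJ
    exact hlow
  · rw [Function.update_of_ne hij]
    exact hT i

lemma YaT_mem (a : Γ) (j : Fin m) {T : Fin m → Finset P} (hT : T ∈ Low (P := P)) :
    YaT κ a j T ∈ Finsupp.supported ℚ ℚ (Low (P := P) (m := m)) := by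
  rw [Finsupp.mem_supported]
  intro T' hT'
  rw [Finset.mem_coe, YaT_def] at hT'
  obtain ⟨J, hJ, hmem⟩ := Finsupp.mem_support_finset_sum T' hT'
  have := Finsupp.support_single_subset hmem
  rw [Finset.mem_singleton] at this
  subst this
  exact update_mem_Low κ hT hJ

lemma Ylin_mem (a : Γ) (j : Fin m) {v : (Fin m → Finset P) →₀ ℚ}
    (hv : v ∈ Finsupp.supported ℚ ℚ (Low (P := P) (m := m))) :
    Ylin κ a j v ∈ Finsupp.supported ℚ ℚ (Low (P := P) (m := m)) := by
  have hv' := (Finsupp.mem_supported ℚ v).mp hv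
  have hrep : Ylin κ a j v = ∑ T ∈ v.support, Ylin κ a j (Finsupp.single T (v T)) := by
    conv_lhs => rw [← Finsupp.sum_single v]
    rw [Finsupp.sum, map_sum]
  rw [hrep]
  refine Submodule.sum_mem _ (fun T hT => ?_)
  rw [Ylin_single]
  exact Submodule.smul_mem _ _ (YaT_mem κ a j (hv' hT))

lemma Ylin_comm (a a' : Γ) {i j : Fin m} (hij : i ≠ j) :
    (Ylin κ a i).comp (Ylin κ a' j) = (Ylin κ a' j).comp (Ylin κ a i) := by
  apply Finsupp.lhom_ext
  intro T r
  simp only [LinearMap.comp_apply, Ylin_single, map_smul]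
  congr 1
  rw [YaT_def κ a' j T, YaT_def κ a i T, map_sum, map_sum]
  simp only [Ylin_single, one_smul]
  have lhs_eq : ∀ J, Function.update T j J i = T i := fun J => Function.update_of_ne hij _ _
  have rhs_eq : ∀ K, Function.update T i K j = T j := fun K => Function.update_of_ne hij.symm _ _
  calc ∑ J ∈ addSet κ a' (T j), YaT κ a i (Function.update T j J)
      = ∑ J ∈ addSet κ a' (T j), ∑ K ∈ addSet κ a (T i),
          Finsupp.single (Function.update (Function.update T j J) i K) (1:ℚ) := by
        refine Finset.sum_congr rfl (fun J _ => ?_)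
        rw [YaT_def, lhs_eq]
    _ = ∑ K ∈ addSet κ a (T i), ∑ J ∈ addSet κ a' (T j),
          Finsupp.single (Function.update (Function.update T i K) j J) (1:ℚ) := by
        rw [Finset.sum_comm]
        refine Finset.sum_congr rfl (fun K _ => Finset.sum_congr rfl (fun J _ => ?_))
        rw [Function.update_comm hij]
    _ = ∑ K ∈ addSet κ a (T i), YaT κ a' j (Function.update T i K) := by
        refine Finset.sum_congr rfl (fun K _ => ?_)
        rw [YaT_def, rhs_eq]

end Plumb

/-! ### Vanishing lemmas -/

section Vanish

variable {P Γ : Type} [Fintype P] [PartialOrder P] [DecidableEq P] {m : ℕ}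
variable (G : SimpleGraph Γ) (κ : P → Γ)

variable (hEC : ∀ x y : P, κ x = κ y → x ≤ y ∨ y ≤ x)
variable (hICE2 : ∀ x y : P, κ x = κ y → x < y →
      (∀ z : P, κ z = κ x → ¬ (x < z ∧ z < y)) →
      (Finset.univ.filter (fun z : P => x < z ∧ z < y ∧ G.Adj (κ z) (κ x))).card = 2)
variable (b c : Γ) (hbc : b ≠ c)

include hEC hICE2 in
lemma Ycc_single (j : Fin m) {T : Fin m → Finset P} (hT : T ∈ Low (P := P)) :
    Ylin κ c j (Ylin κ c j (Finsupp.single T (1:ℚ))) = 0 := by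
  rw [Ylin_single, one_smul, YaT_def, map_sum]
  refine Finset.sum_eq_zero (fun J hJ => ?_)
  obtain ⟨x1, ⟨hx1c, hx1I, hlow⟩, rfl⟩ := (mem_addSet_iff κ).mp hJ
  rw [Ylin_single, one_smul, YaT_def, Function.update_self]
  rw [addSet_eq_empty G κ hEC hICE2 c (T j) (hT j) x1 hx1c hx1I hlow _
    (subset_refl _) (by simp) (by simp)]
  exact Finset.sum_empty

include hEC hICE2 hbc in
lemma Ycbc_single (j : Fin m) {T : Fin m → Finset P} (hT : T ∈ Low (P := P)) :
    Ylin κ c j (Ylin κ b j (Ylin κ c j (Finsupp.single T (1:ℚ)))) = 0 := by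
  rw [Ylin_single, one_smul, YaT_def, map_sum, map_sum]
  refine Finset.sum_eq_zero (fun J hJ => ?_)
  obtain ⟨x1, ⟨hx1c, hx1I, hlow1⟩, rfl⟩ := (mem_addSet_iff κ).mp hJ
  rw [Ylin_single, one_smul, YaT_def, Function.update_self, map_sum]
  refine Finset.sum_eq_zero (fun J' hJ' => ?_)
  obtain ⟨u, ⟨hub, huJ, hlow2⟩, rfl⟩ := (mem_addSet_iff κ).mp hJ'
  rw [Ylin_single, one_smul, YaT_def, Function.update_idem, Function.update_self]
  have hdiff : insert u (insert x1 (T j)) \ insert x1 (T j) ⊆ {u} := by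
    intro w hw
    rw [Finset.mem_sdiff, Finset.mem_insert] at hw
    rcases hw.1 with h | h
    · simpa using h
    · exact absurd h hw.2
  rw [addSet_eq_empty G κ hEC hICE2 c (T j) (hT j) x1 hx1c hx1I hlow1
    (insert u (insert x1 (T j))) (Finset.subset_insert _ _)
    (le_trans (Finset.card_le_card hdiff) (by simp))
    (fun w hw => by
      have : w = u := Finset.mem_singleton.mp (hdiff hw)
      rw [this, hub]; exact hbc)]
  exact Finset.sum_empty

include hEC hICE2 in
lemma Ycc_W (j : Fin m) {v : (Fin m → Finset P) →₀ ℚ}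
    (hv : v ∈ Finsupp.supported ℚ ℚ (Low (P := P) (m := m))) :
    Ylin κ c j (Ylin κ c j v) = 0 := by
  have hv' := (Finsupp.mem_supported ℚ v).mp hv
  have hrep : v = ∑ T ∈ v.support, (v T) • Finsupp.single T (1:ℚ) := by
    conv_lhs => rw [← Finsupp.sum_single v]
    rw [Finsupp.sum]
    refine Finset.sum_congr rfl (fun T _ => ?_)
    rw [Finsupp.smul_single', mul_one]
  rw [hrep, map_sum, map_sum]
  refine Finset.sum_eq_zero (fun T hT => ?_)
  rw [map_smul, map_smul, Ycc_single G κ hEC hICE2 c j (hv' hT), smul_zero]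

include hEC hICE2 hbc in
lemma Ycbc_W (j : Fin m) {v : (Fin m → Finset P) →₀ ℚ}
    (hv : v ∈ Finsupp.supported ℚ ℚ (Low (P := P) (m := m))) :
    Ylin κ c j (Ylin κ b j (Ylin κ c j v)) = 0 := by
  have hv' := (Finsupp.mem_supported ℚ v).mp hv
  have hrep : v = ∑ T ∈ v.support, (v T) • Finsupp.single T (1:ℚ) := by
    conv_lhs => rw [← Finsupp.sum_single v]
    rw [Finsupp.sum]
    refine Finset.sum_congr rfl (fun T _ => ?_)
    rw [Finsupp.smul_single', mul_one]
  rw [hrep, map_sum, map_sum, map_sum]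
  refine Finset.sum_eq_zero (fun T hT => ?_)
  rw [map_smul, map_smul, map_smul, Ycbc_single G κ hEC hICE2 b c hbc j (hv' hT), smul_zero]

end Vanish

/-! ### Main theorem -/

/-- Lemma 5.3: for a finite `Γ`-colored poset satisfying EC, NA, AC, and ICE2 (with
respect to a simple graph structure on the colors), distinct colors `b, c`, `m ≥ 1`,
and `q > p ≥ 0`, the alternating identity
`∑_{k=0}^{q} (-1)^k ⟨c^{q-k}⟩∘⟨b^p⟩∘⟨c^k⟩ = 0` holds on `m`-tuples of order ideals. -/
theorem stmt16 (P Γ : Type) [Fintype P] [PartialOrder P] [DecidableEq P] [Nonempty P]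
    (G : SimpleGraph Γ) (κ : P → Γ) (hsurj : Function.Surjective κ)
    (hEC : ∀ x y : P, κ x = κ y → x ≤ y ∨ y ≤ x)
    (hNA : ∀ x y : P, x ⋖ y → G.Adj (κ x) (κ y))
    (hAC : ∀ x y : P, G.Adj (κ x) (κ y) → x ≤ y ∨ y ≤ x)
    (hICE2 : ∀ x y : P, κ x = κ y → x < y →
      (∀ z : P, κ z = κ x → ¬ (x < z ∧ z < y)) →
      (Finset.univ.filter (fun z : P => x < z ∧ z < y ∧ G.Adj (κ z) (κ x))).card = 2)
    (b c : Γ) (hbc : b ≠ c) (m : ℕ) (hm : 1 ≤ m) (p q : ℕ) (hpq : p < q) :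
    ∀ T : Fin m → Finset P, (∀ j, IsLowerSet (↑(T j) : Set P)) →
      ∑ k ∈ Finset.range (q + 1), ((-1 : ℚ)) ^ k •
        opPowT κ c (q - k) (opPowT κ b p (opPowT κ c k (Finsupp.single T 1))) = 0 := by
  intro T hT
  classical
  set WS : Submodule ℚ ((Fin m → Finset P) →₀ ℚ) :=
    Finsupp.supported ℚ ℚ (Low (P := P) (m := m)) with hWS
  have hmemY : ∀ (a : Γ) (j : Fin m), ∀ v ∈ WS, Ylin κ a j v ∈ WS :=
    fun a j v hv => Ylin_mem κ a j hv
  let y : Fin m → Module.End ℚ WS := fun j => (Ylin κ c j).restrict (hmemY c j)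
  let z : Fin m → Module.End ℚ WS := fun j => (Ylin κ b j).restrict (hmemY b j)
  have hcoe_y : ∀ (j : Fin m) (w : WS), ((y j w : WS) : (Fin m → Finset P) →₀ ℚ)
      = Ylin κ c j w := fun j w => rfl
  have hcoe_z : ∀ (j : Fin m) (w : WS), ((z j w : WS) : (Fin m → Finset P) →₀ ℚ)
      = Ylin κ b j w := fun j w => rfl
  have hyy : ∀ i j, i ≠ j → Commute (y i) (y j) := by
    intro i j hij
    refine LinearMap.ext (fun w => Subtype.ext ?_)
    show Ylin κ c i (Ylin κ c j w) = Ylin κ c j (Ylin κ c i w)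
    exact LinearMap.congr_fun (Ylin_comm κ c c hij) (w : (Fin m → Finset P) →₀ ℚ)
  have hyz : ∀ i j, i ≠ j → Commute (y i) (z j) := by
    intro i j hij
    refine LinearMap.ext (fun w => Subtype.ext ?_)
    show Ylin κ c i (Ylin κ b j w) = Ylin κ b j (Ylin κ c i w)
    exact LinearMap.congr_fun (Ylin_comm κ c b hij) (w : (Fin m → Finset P) →₀ ℚ)
  have h2 : ∀ j, y j * y j = 0 := by
    intro j
    refine LinearMap.ext (fun w => Subtype.ext ?_)
    show Ylin κ c j (Ylin κ c j w) = 0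
    exact Ycc_W G κ hEC hICE2 c j w.2
  have h3 : ∀ j, y j * z j * y j = 0 := by
    intro j
    refine LinearMap.ext (fun w => Subtype.ext ?_)
    show Ylin κ c j (Ylin κ b j (Ylin κ c j w)) = 0
    exact Ycbc_W G κ hEC hICE2 b c hbc j w.2
  set A : Module.End ℚ WS := ∑ j, y j with hA
  set B : Module.End ℚ WS := ∑ j, z j with hB
  have hbr : dd A (dd A B) = 0 := bracket_zero Finset.univ y z
    (fun i j h => hyy i j h) (fun i j h => hyz i j h) h2 h3
  have hserre := serre_ring A B hbr hpq
  -- the basis vector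
  have hw0 : Finsupp.single T (1:ℚ) ∈ WS := Finsupp.single_mem_supported ℚ 1 hT
  set w0 : WS := ⟨Finsupp.single T (1:ℚ), hw0⟩ with hw0def
  -- coordinate sums act as XvT
  have hXc : ∀ w : WS, XvT κ c (w : (Fin m → Finset P) →₀ ℚ) = ((A w : WS) : (Fin m → Finset P) →₀ ℚ) := by
    intro w
    rw [← Xlin_apply, Xlin_eq_sum, hA]
    rw [LinearMap.sum_apply, LinearMap.sum_apply]
    rw [AddSubmonoidClass.coe_finset_sum]
    exact Finset.sum_congr rfl (fun j _ => rfl)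
  have hXb : ∀ w : WS, XvT κ b (w : (Fin m → Finset P) →₀ ℚ) = ((B w : WS) : (Fin m → Finset P) →₀ ℚ) := by
    intro w
    rw [← Xlin_apply, Xlin_eq_sum, hB]
    rw [LinearMap.sum_apply, LinearMap.sum_apply]
    rw [AddSubmonoidClass.coe_finset_sum]
    exact Finset.sum_congr rfl (fun j _ => rfl)
  have hpowc : ∀ (k : ℕ) (w : WS), (XvT κ c)^[k] (w : (Fin m → Finset P) →₀ ℚ)
      = (((A ^ k) w : WS) : (Fin m → Finset P) →₀ ℚ) := by
    intro k
    induction k with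
    | zero => intro w; simp
    | succ k ih =>
      intro w
      rw [Function.iterate_succ_apply', ih, hXc, pow_succ']
      rfl
  have hpowb : ∀ (k : ℕ) (w : WS), (XvT κ b)^[k] (w : (Fin m → Finset P) →₀ ℚ)
      = (((B ^ k) w : WS) : (Fin m → Finset P) →₀ ℚ) := by
    intro k
    induction k with
    | zero => intro w; simp
    | succ k ih =>
      intro w
      rw [Function.iterate_succ_apply', ih, hXb, pow_succ']
      rfl
  have opPow_def : ∀ (a : Γ) (k : ℕ) (v : (Fin m → Finset P) →₀ ℚ),
      opPowT κ a k v = ((k.factorial : ℚ)⁻¹) • (XvT κ a)^[k] v := fun _ _ _ => rfl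
  -- each summand
  have eb : ∀ u : WS, opPowT κ b p (u : (Fin m → Finset P) →₀ ℚ)
      = ((((p.factorial : ℚ)⁻¹) • ((B ^ p) u) : WS) : (Fin m → Finset P) →₀ ℚ) := by
    intro u
    rw [opPow_def b p, hpowb p, ← Submodule.coe_smul]
  have ec : ∀ (n : ℕ) (u : WS), opPowT κ c n (u : (Fin m → Finset P) →₀ ℚ)
      = ((((n.factorial : ℚ)⁻¹) • ((A ^ n) u) : WS) : (Fin m → Finset P) →₀ ℚ) := by
    intro n u
    rw [opPow_def c n, hpowc n, ← Submodule.coe_smul]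
  have hterm : ∀ k, opPowT κ c (q - k) (opPowT κ b p (opPowT κ c k (Finsupp.single T 1)))
      = (((((q-k).factorial : ℚ)⁻¹ * ((p.factorial : ℚ)⁻¹ * ((k.factorial : ℚ)⁻¹))) •
          ((A ^ (q-k) * B ^ p * A ^ k) w0) : WS) : (Fin m → Finset P) →₀ ℚ) := by
    intro k
    have e1 : Finsupp.single T (1:ℚ) = (w0 : (Fin m → Finset P) →₀ ℚ) := rfl
    rw [e1, ec k w0, eb, ec (q-k)]
    congr 1
    rw [map_smul (B ^ p), map_smul (A ^ (q-k)), map_smul (A ^ (q-k)), smul_smul, smul_smul,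
      Module.End.mul_apply, Module.End.mul_apply, mul_assoc]
  rw [Finset.sum_congr rfl (fun k _ => by rw [hterm k])]
  -- pull everything inside WS
  simp only [← Submodule.coe_smul]
  rw [← AddSubmonoidClass.coe_finset_sum, ZeroMemClass.coe_eq_zero]
  simp only [smul_smul]
  -- now a statement inside WS
  have hcoeff : ∀ k ∈ Finset.range (q+1),
      (((-1:ℚ))^k * (((q-k).factorial : ℚ)⁻¹ * ((p.factorial : ℚ)⁻¹ * ((k.factorial : ℚ)⁻¹))))
      = ((q.factorial : ℚ) * (p.factorial : ℚ))⁻¹ * ((-1:ℚ)^k * (q.choose k : ℚ)) := by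
    intro k hk
    rw [Finset.mem_range] at hk
    have hq : ((q.choose k) * k.factorial * (q-k).factorial : ℕ) = q.factorial :=
      Nat.choose_mul_factorial_mul_factorial (by omega)
    have hq' : ((q.choose k : ℚ)) * (k.factorial : ℚ) * ((q-k).factorial : ℚ) = (q.factorial : ℚ) := by
      exact_mod_cast congrArg (Nat.cast : ℕ → ℚ) hq
    have h1 : ((q-k).factorial : ℚ) ≠ 0 := Nat.cast_ne_zero.mpr (Nat.factorial_ne_zero _)
    have h2 : (p.factorial : ℚ) ≠ 0 := Nat.cast_ne_zero.mpr (Nat.factorial_ne_zero _)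
    have h3 : (k.factorial : ℚ) ≠ 0 := Nat.cast_ne_zero.mpr (Nat.factorial_ne_zero _)
    have h4 : (q.factorial : ℚ) ≠ 0 := Nat.cast_ne_zero.mpr (Nat.factorial_ne_zero _)
    have key : (((q-k).factorial : ℚ))⁻¹ * ((p.factorial : ℚ)⁻¹ * ((k.factorial : ℚ)⁻¹))
        = ((q.factorial : ℚ) * (p.factorial : ℚ))⁻¹ * (q.choose k : ℚ) := by
      field_simp
      linear_combination (-1 : ℚ) * hq'
    rw [key]
    ring
  rw [Finset.sum_congr rfl (fun k hk => by rw [hcoeff k hk, mul_smul])]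
  rw [← Finset.smul_sum]
  have hmain : ∑ k ∈ Finset.range (q+1), ((-1:ℚ)^k * (q.choose k : ℚ)) •
      ((A ^ (q-k) * B ^ p * A ^ k) w0) = 0 := by
    have happ : (∑ k ∈ Finset.range (q+1), (-1 : Module.End ℚ WS)^k *
        ((q.choose k : ℕ) : Module.End ℚ WS) * (A ^ (q-k) * B ^ p * A ^ k)) w0 = 0 := by
      rw [hserre]
      rfl
    rw [LinearMap.sum_apply] at happ
    rw [← happ]
    refine Finset.sum_congr rfl (fun k hk => ?_)
    rw [show ((-1 : Module.End ℚ WS)^k * ((q.choose k : ℕ) : Module.End ℚ WS) *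
        (A ^ (q-k) * B ^ p * A ^ k))
        = (algebraMap ℚ (Module.End ℚ WS) ((-1:ℚ)^k * ((q.choose k : ℕ) : ℚ))) *
          (A ^ (q-k) * B ^ p * A ^ k) by
      rw [map_mul, map_pow, map_neg, map_one, map_natCast]]
    rw [← Algebra.smul_def, LinearMap.smul_apply]
  rw [hmain, smul_zero]
end

section
/- Let P be a finite Γ-colored poset satisfying EC, NA, AC, and ICE2, and let b, c ∈ Γ be distinct colors. For m ≥ 1 and integers p, q, r ≥ 0 with r ≥ p, the operator identity ⟨c^q⟩∘⟨b^p⟩∘⟨c^r⟩ = ∑_{k=0}^{min(p,q)} C(q+r-p, q-k) · ⟨b^{p-k}⟩∘⟨c^{q+r}⟩∘⟨b^k⟩ holds on m-tuples of order ideals of P. -/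
open scoped Classical

set_option linter.unusedSectionVars false

lemma sum_triangle {β : Type*} [AddCommMonoid β] (n : ℕ) (F : ℕ → ℕ → β) :
    ∑ k ∈ Finset.range (n+1), ∑ t ∈ Finset.range (k+1), F k t
      = ∑ t ∈ Finset.range (n+1), ∑ k ∈ Finset.Icc t n, F k t := by
  rw [Finset.sum_sigma', Finset.sum_sigma']
  refine Finset.sum_nbij' (fun x => ⟨x.2, x.1⟩) (fun x => ⟨x.2, x.1⟩) ?_ ?_ ?_ ?_ ?_
  · rintro ⟨k, t⟩ h
    simp only [Finset.mem_sigma, Finset.mem_range, Finset.mem_Icc] at *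
    omega
  · rintro ⟨t, k⟩ h
    simp only [Finset.mem_sigma, Finset.mem_range, Finset.mem_Icc] at *
    omega
  · rintro ⟨k, t⟩ _; rfl
  · rintro ⟨t, k⟩ _; rfl
  · rintro ⟨k, t⟩ _; rfl


section RingLemma

variable {R : Type*} [Ring R] [Algebra ℚ R] (B C Z : R)
  (hZ : Z = B * C - C * B) (hZB : Z * B = B * Z) (hZC : Z * C = C * Z)

include hZ hZB in
lemma CmulBpow (n : ℕ) : C * B ^ n = B ^ n * C - (n : ℚ) • (B ^ (n - 1) * Z) := by
  induction n with
  | zero => simp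
  | succ n ih =>
    have hstep : (n : ℚ) • (B ^ (n - 1) * (B * Z)) = (n : ℚ) • (B ^ n * Z) := by
      cases n with
      | zero => simp
      | succ n => rw [← mul_assoc, ← pow_succ]; norm_num
    have hCB : C * B = B * C - Z := by rw [hZ]; noncomm_ring
    have h1 : C * B ^ (n + 1) = (C * B ^ n) * B := by rw [pow_succ, mul_assoc]
    rw [h1, ih, sub_mul, smul_mul_assoc, mul_assoc (B ^ n) C B, hCB,
      mul_assoc (B ^ (n - 1)) Z B, hZB, hstep, mul_sub, ← mul_assoc, ← pow_succ]
    push_cast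
    rw [add_smul, one_smul]
    abel

include hZ hZB hZC in
lemma CLpow (p q : ℕ) : C ^ q * B ^ p =
    ∑ t ∈ Finset.range (q + 1),
      ((-1 : ℚ) ^ t * (q.choose t : ℚ) * (p.descFactorial t : ℚ)) •
        (B ^ (p - t) * C ^ (q - t) * Z ^ t) := by
  induction q with
  | zero => simp
  | succ q ih =>
    have hq1 : C ^ (q + 1) * B ^ p = C * (C ^ q * B ^ p) := by
      rw [pow_succ']; rw [mul_assoc]
    rw [hq1, ih, Finset.mul_sum]
    have hterm : ∀ t ∈ Finset.range (q + 1),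
        C * (((-1 : ℚ) ^ t * (q.choose t : ℚ) * (p.descFactorial t : ℚ)) •
          (B ^ (p - t) * C ^ (q - t) * Z ^ t)) =
        ((-1 : ℚ) ^ t * (q.choose t : ℚ) * (p.descFactorial t : ℚ)) •
          (B ^ (p - t) * C ^ (q + 1 - t) * Z ^ t)
        - ((-1 : ℚ) ^ t * (q.choose t : ℚ) * (p.descFactorial t : ℚ) * ((p - t : ℕ) : ℚ)) •
          (B ^ (p - (t+1)) * C ^ (q - t) * Z ^ (t+1)) := by
      intro t ht
      rw [Finset.mem_range] at ht
      have h2 : q + 1 - t = (q - t) + 1 := by omega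
      have h3 : p - t - 1 = p - (t + 1) := by omega
      have hW : C * (B ^ (p - t) * C ^ (q - t) * Z ^ t)
          = (C * B ^ (p - t)) * (C ^ (q - t) * Z ^ t) := by noncomm_ring
      have hA : B ^ (p - t) * C * (C ^ (q - t) * Z ^ t)
          = B ^ (p - t) * C ^ (q + 1 - t) * Z ^ t := by
        rw [h2, pow_succ']; noncomm_ring
      have hc : Z * C ^ (q - t) = C ^ (q - t) * Z :=
        (Commute.pow_right hZC (q - t)).eq
      have hB : B ^ (p - t - 1) * Z * (C ^ (q - t) * Z ^ t)
          = B ^ (p - (t+1)) * C ^ (q - t) * Z ^ (t+1) := by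
        rw [h3, pow_succ',
          show B ^ (p - (t+1)) * Z * (C ^ (q - t) * Z ^ t)
            = B ^ (p - (t+1)) * (Z * C ^ (q - t)) * Z ^ t from by noncomm_ring, hc]
        noncomm_ring
      rw [mul_smul_comm, hW, CmulBpow B C Z hZ hZB, sub_mul, smul_mul_assoc, hA, hB,
        smul_sub, smul_smul]
    rw [Finset.sum_congr rfl hterm, Finset.sum_sub_distrib]
    have hfirst : ∑ t ∈ Finset.range (q + 1),
        ((-1 : ℚ) ^ t * (q.choose t : ℚ) * (p.descFactorial t : ℚ)) •
          (B ^ (p - t) * C ^ (q + 1 - t) * Z ^ t)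
        = (∑ t ∈ Finset.range (q + 1),
            ((-1 : ℚ) ^ (t+1) * (q.choose (t+1) : ℚ) * (p.descFactorial (t+1) : ℚ)) •
              (B ^ (p - (t+1)) * C ^ (q + 1 - (t+1)) * Z ^ (t+1)))
          + (B ^ p * C ^ (q + 1) * Z ^ 0) := by
      rw [Finset.sum_range_succ' (fun t => ((-1 : ℚ) ^ t * (q.choose t : ℚ) * (p.descFactorial t : ℚ)) •
          (B ^ (p - t) * C ^ (q + 1 - t) * Z ^ t)) q]
      simp only [Nat.choose_zero_right, Nat.descFactorial_zero, Nat.cast_one, pow_zero,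
        one_mul, mul_one, Nat.sub_zero, one_smul]
      rw [Finset.sum_range_succ]
      simp only [Nat.choose_succ_self, Nat.cast_zero, mul_zero, zero_mul, zero_smul, add_zero]
    rw [hfirst]
    rw [Finset.sum_range_succ' (fun t => ((-1 : ℚ) ^ t * ((q+1).choose t : ℚ) * (p.descFactorial t : ℚ)) •
        (B ^ (p - t) * C ^ (q + 1 - t) * Z ^ t)) (q+1)]
    simp only [Nat.choose_zero_right, Nat.descFactorial_zero, Nat.cast_one, pow_zero,
      one_mul, mul_one, Nat.sub_zero, one_smul]
    rw [add_sub_right_comm]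
    congr 1
    rw [← Finset.sum_sub_distrib]
    apply Finset.sum_congr rfl
    intro t ht
    simp only [Nat.succ_sub_succ_eq_sub]
    rw [← sub_smul]
    congr 1
    rw [Nat.descFactorial_succ, Nat.choose_succ_succ]
    push_cast
    ring

end RingLemma


lemma VDM (t p q r : ℕ) (htp : t ≤ p) (htq : t ≤ q) (hpr : p ≤ r) :
    ∑ k ∈ Finset.Icc t (min p q), (q + r - p).choose (q - k) * (p - t).choose (k - t)
      = (q + r - t).choose (q - t) := by
  have h1 : q + r - t = (q + r - p) + (p - t) := by omega
  rw [h1, Nat.add_choose_eq, Finset.Nat.sum_antidiagonal_eq_sum_range_succ_mk]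
  have h2 : ∑ k ∈ Finset.Icc t (min p q), (q + r - p).choose (q - k) * (p - t).choose (k - t)
      = ∑ k ∈ Finset.Icc t q, (q + r - p).choose (q - k) * (p - t).choose (k - t) := by
    apply Finset.sum_subset
    · apply Finset.Icc_subset_Icc_right; omega
    · intro k hk hk'
      simp only [Finset.mem_Icc] at hk hk'
      have : p - t < k - t := by omega
      rw [Nat.choose_eq_zero_of_lt this, mul_zero]
  rw [h2]
  refine Finset.sum_nbij' (fun k => q - k) (fun i => q - i) ?_ ?_ ?_ ?_ ?_
  · intro k hk; simp only [Finset.mem_Icc] at hk; simp only [Finset.mem_range]; omega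
  · intro i hi; simp only [Finset.mem_range] at hi; simp only [Finset.mem_Icc]; omega
  · intro k hk; simp only [Finset.mem_Icc] at hk; omega
  · intro i hi; simp only [Finset.mem_range] at hi; omega
  · intro k hk; simp only [Finset.mem_Icc] at hk
    dsimp only
    rw [show q - t - (q - k) = k - t from by omega]

lemma scalarId (p q r t : ℕ) (hpr : p ≤ r) (htp : t ≤ p) (htq : t ≤ q) :
    ((q.factorial * p.factorial * r.factorial : ℕ) : ℚ)⁻¹ *
        ((q.choose t : ℚ) * (p.descFactorial t : ℚ))
      = ∑ k ∈ Finset.Icc t (min p q), ((q + r - p).choose (q - k) : ℚ) *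
          ((((p - k).factorial * (q + r).factorial * k.factorial : ℕ) : ℚ)⁻¹ *
            (((q + r).choose t : ℚ) * (k.descFactorial t : ℚ))) := by
  have hfac : ∀ n : ℕ, ((n.factorial : ℕ) : ℚ) ≠ 0 := fun n => by
    exact_mod_cast n.factorial_ne_zero
  have hsum : ∀ k ∈ Finset.Icc t (min p q),
      ((q + r - p).choose (q - k) : ℚ) *
          ((((p - k).factorial * (q + r).factorial * k.factorial : ℕ) : ℚ)⁻¹ *
            (((q + r).choose t : ℚ) * (k.descFactorial t : ℚ)))
        = (((q + r).choose t : ℚ) / (((q + r).factorial * (p - t).factorial : ℕ) : ℚ)) *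
          (((q + r - p).choose (q - k) * (p - t).choose (k - t) : ℕ) : ℚ) := by
    intro k hk
    simp only [Finset.mem_Icc] at hk
    obtain ⟨htk, hkm⟩ := hk
    have hkp : k ≤ p := le_trans hkm (min_le_left _ _)
    have hk1 : (k.factorial : ℚ) = ((k - t).factorial : ℚ) * (k.descFactorial t : ℚ) := by
      exact_mod_cast congrArg (Nat.cast (R := ℚ)) (Nat.factorial_mul_descFactorial htk).symm
    have hk2 : ((p - t).choose (k - t) : ℚ)
        = ((p - t).factorial : ℚ) / (((k - t).factorial : ℚ) * ((p - k).factorial : ℚ)) := by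
      rw [Nat.cast_choose ℚ (show k - t ≤ p - t by omega),
        show p - t - (k - t) = p - k from by omega]
    have hd : (k.descFactorial t : ℚ) ≠ 0 := by
      have : k.descFactorial t ≠ 0 := by
        intro h0
        have := Nat.descFactorial_eq_zero_iff_lt.mp h0
        omega
      exact_mod_cast this
    have f1 := hfac (p - k); have f2 := hfac (q + r); have f3 := hfac (k - t)
    have f4 := hfac (p - t)
    push_cast
    rw [hk2, hk1]
    field_simp
  rw [Finset.sum_congr rfl hsum, ← Finset.mul_sum, ← Nat.cast_sum, VDM t p q r htp htq hpr]
  have e1 : (q.choose t : ℚ) = (q.factorial : ℚ) / ((t.factorial : ℚ) * ((q - t).factorial : ℚ)) :=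
    Nat.cast_choose ℚ htq
  have e2 : (p.descFactorial t : ℚ) = (p.factorial : ℚ) / ((p - t).factorial : ℚ) := by
    rw [eq_div_iff (hfac _)]
    exact_mod_cast congrArg (Nat.cast (R := ℚ))
      ((mul_comm _ _).trans (Nat.factorial_mul_descFactorial htp))
  have e3 : (((q + r).choose t : ℚ)) = ((q + r).factorial : ℚ) /
      ((t.factorial : ℚ) * (((q + r) - t).factorial : ℚ)) :=
    Nat.cast_choose ℚ (show t ≤ q + r by omega)
  have e4 : ((q + r - t).choose (q - t) : ℚ) = ((q + r - t).factorial : ℚ) /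
      (((q - t).factorial : ℚ) * ((r).factorial : ℚ)) := by
    rw [Nat.cast_choose ℚ (show q - t ≤ q + r - t by omega),
      show q + r - t - (q - t) = r from by omega]
  push_cast
  rw [e1, e2, e3, e4]
  have g1 := hfac q; have g2 := hfac p; have g3 := hfac r; have g4 := hfac t
  have g5 := hfac (q - t); have g6 := hfac (p - t); have g7 := hfac (q + r)
  have g8 := hfac (q + r - t)
  field_simp



section Comb

variable {P Γ : Type} [Fintype P] [PartialOrder P] [DecidableEq P]
  (G : SimpleGraph Γ) (κ : P → Γ)

/-- `x` can be added to the ideal `I` with color `a`. -/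
def Addable (a : Γ) (I : Finset P) (x : P) : Prop :=
  κ x = a ∧ x ∉ I ∧ IsLowerSet ((insert x I : Finset P) : Set P)

lemma mem_addSet {a : Γ} {I J : Finset P} :
    J ∈ addSet κ a I ↔ ∃ x, Addable κ a I x ∧ J = insert x I := by
  simp only [addSet, Finset.mem_image, Finset.mem_filter, Finset.mem_univ, true_and, Addable]
  constructor
  · rintro ⟨x, hx, rfl⟩; exact ⟨x, hx, rfl⟩
  · rintro ⟨x, hx, rfl⟩; exact ⟨x, hx, rfl⟩

lemma lower_mem {I : Finset P} (hI : IsLowerSet ((I : Finset P) : Set P)) {x y : P}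
    (hxy : x ≤ y) (hy : y ∈ I) : x ∈ I := by
  exact hI hxy hy

variable (hEC : ∀ x y : P, κ x = κ y → x ≤ y ∨ y ≤ x)
  (hNA : ∀ x y : P, x ⋖ y → G.Adj (κ x) (κ y))
  (hICE2 : ∀ x y : P, κ x = κ y → x < y →
      (∀ z : P, κ z = κ x → ¬ (x < z ∧ z < y)) →
      (Finset.univ.filter (fun z : P => x < z ∧ z < y ∧ G.Adj (κ z) (κ x))).card = 2)

include hEC hNA in
lemma no_double {a : Γ} {I : Finset P} (hI : IsLowerSet ((I : Finset P) : Set P)) {x y : P}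
    (hx : Addable κ a I x) (hy : Addable κ a (insert x I) y) : False := by
  obtain ⟨hxa, hxI, hxL⟩ := hx
  obtain ⟨hya, hyJ, hyL⟩ := hy
  have hne : y ≠ x := fun h => hyJ (h ▸ Finset.mem_insert_self x I)
  rcases hEC x y (hxa.trans hya.symm) with hle | hle
  · have hlt : x < y := lt_of_le_of_ne hle (fun h => hne h.symm)
    have hcov : x ⋖ y := by
      refine ⟨hlt, fun w hxw hwy => ?_⟩
      have hw : w ∈ insert y (insert x I) :=
        lower_mem hyL hwy.le (Finset.mem_insert_self y _)
      rcases Finset.mem_insert.mp hw with h | hw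
      · exact absurd h hwy.ne
      rcases Finset.mem_insert.mp hw with h | hw
      · exact absurd h hxw.ne'
      · exact hxI (lower_mem hI hxw.le hw)
    have := hNA x y hcov
    rw [hxa, hya] at this
    exact G.irrefl this
  · exact hyJ (lower_mem hxL hle (Finset.mem_insert_self x I))

include hEC hNA hICE2 in
lemma no_triple {a a' : Γ} (haa : a ≠ a') {I : Finset P}
    (hI : IsLowerSet ((I : Finset P) : Set P)) {x z x' : P}
    (hx : Addable κ a I x) (hz : Addable κ a' (insert x I) z)
    (hx' : Addable κ a (insert z (insert x I)) x') : False := by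
  obtain ⟨hxa, hxI, hxL⟩ := hx
  obtain ⟨hza, hzI, hzL⟩ := hz
  obtain ⟨hx'a, hx'I, hx'L⟩ := hx'
  have hxmem : x ∈ insert z (insert x I) :=
    Finset.mem_insert_of_mem (Finset.mem_insert_self x I)
  have hne : x' ≠ x := fun h => hx'I (h ▸ hxmem)
  have hxlt : x < x' := by
    rcases hEC x x' (hxa.trans hx'a.symm) with hle | hle
    · exact lt_of_le_of_ne hle (fun h => hne h.symm)
    · exact absurd (lower_mem hzL hle hxmem) hx'I
  -- helper : any w with x < w < x' lies in insert z (insert x I)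
  have hmid : ∀ w, x < w → w < x' → w = z ∨ w ∈ I := by
    intro w hxw hwx'
    have hw : w ∈ insert x' (insert z (insert x I)) :=
      lower_mem hx'L hwx'.le (Finset.mem_insert_self x' _)
    rcases Finset.mem_insert.mp hw with h | hw
    · exact absurd h hwx'.ne
    rcases Finset.mem_insert.mp hw with h | hw
    · exact Or.inl h
    rcases Finset.mem_insert.mp hw with h | hw
    · exact absurd h hxw.ne'
    · exact Or.inr hw
  have hAdjaa : ¬ G.Adj (κ x) (κ x') := by rw [hxa, hx'a]; exact G.irrefl
  by_cases hxz : x ≤ z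
  · have hxzne : x ≠ z := fun h => hzI (h ▸ Finset.mem_insert_self x I)
    have hxzlt : x < z := lt_of_le_of_ne hxz hxzne
    have hcovxz : x ⋖ z := by
      refine ⟨hxzlt, fun w hxw hwz => ?_⟩
      have hw : w ∈ insert z (insert x I) :=
        lower_mem hzL hwz.le (Finset.mem_insert_self z _)
      rcases Finset.mem_insert.mp hw with h | hw
      · exact absurd h hwz.ne
      rcases Finset.mem_insert.mp hw with h | hw
      · exact absurd h hxw.ne'
      · exact hxI (lower_mem hI hxw.le hw)
    have hadjxz : G.Adj (κ x) (κ z) := hNA x z hcovxz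
    by_cases hzx' : z < x'
    · -- ICE2 case
      have hconsec : ∀ w : P, κ w = κ x → ¬ (x < w ∧ w < x') := by
        rintro w hw ⟨hxw, hwx'⟩
        rcases hmid w hxw hwx' with h | h
        · rw [h] at hw; rw [hza, hxa] at hw; exact haa hw.symm
        · exact hxI (lower_mem hI hxw.le h)
      have hcard := hICE2 x x' (hxa.trans hx'a.symm) hxlt hconsec
      have hzmem : z ∈ Finset.univ.filter
          (fun w : P => x < w ∧ w < x' ∧ G.Adj (κ w) (κ x)) := by
        simp only [Finset.mem_filter, Finset.mem_univ, true_and]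
        exact ⟨hxzlt, hzx', hadjxz.symm⟩
      obtain ⟨z', hz'mem, hz'ne⟩ := Finset.exists_mem_ne (by rw [hcard]; norm_num) z
      simp only [Finset.mem_filter, Finset.mem_univ, true_and] at hz'mem
      obtain ⟨hxz', hz'x', hadj'⟩ := hz'mem
      rcases hmid z' hxz' hz'x' with h | h
      · exact hz'ne h
      · exact hxI (lower_mem hI hxz'.le h)
    · -- z not below x' : covering x ⋖ x'
      have hcov : x ⋖ x' := by
        refine ⟨hxlt, fun w hxw hwx' => ?_⟩
        rcases hmid w hxw hwx' with h | h
        · exact hzx' (h ▸ hwx')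
        · exact hxI (lower_mem hI hxw.le h)
      exact hAdjaa (hNA x x' hcov)
  · have hcov : x ⋖ x' := by
      refine ⟨hxlt, fun w hxw hwx' => ?_⟩
      rcases hmid w hxw hwx' with h | h
      · exact hxz (h ▸ hxw.le)
      · exact hxI (lower_mem hI hxw.le h)
    exact hAdjaa (hNA x x' hcov)

end Comb


section Op

variable {P Γ : Type} [Fintype P] [PartialOrder P] [DecidableEq P]
  (κ : P → Γ) {m : ℕ}

/-- single-coordinate raising applied to a basis tuple -/
noncomputable def wv (a : Γ) (j : Fin m) (T : Fin m → Finset P) : (Fin m → Finset P) →₀ ℚ :=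
  ∑ J ∈ addSet κ a (T j), Finsupp.single (Function.update T j J) (1 : ℚ)

/-- single-coordinate raising operator as a linear map -/
noncomputable def Xloc (a : Γ) (j : Fin m) :
    ((Fin m → Finset P) →₀ ℚ) →ₗ[ℚ] ((Fin m → Finset P) →₀ ℚ) :=
  Finsupp.lsum ℚ (fun T => LinearMap.toSpanSingleton ℚ _ (wv κ a j T))

/-- full raising operator as a linear map -/
noncomputable def Xfull (a : Γ) :
    ((Fin m → Finset P) →₀ ℚ) →ₗ[ℚ] ((Fin m → Finset P) →₀ ℚ) :=
  ∑ j : Fin m, Xloc κ a j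

lemma Xloc_single (a : Γ) (j : Fin m) (T : Fin m → Finset P) :
    Xloc κ a j (Finsupp.single T 1) = wv κ a j T := by
  simp [Xloc]

lemma XaT_eq (a : Γ) (T : Fin m → Finset P) : XaT κ a T = ∑ j, wv κ a j T := rfl

lemma XvT_eq (a : Γ) (v : (Fin m → Finset P) →₀ ℚ) : XvT κ a v = Xfull κ a v := by
  rw [XvT, Xfull]
  rw [LinearMap.sum_apply]
  have h1 : ∀ j : Fin m, Xloc κ a j v = ∑ T ∈ v.support, v T • wv κ a j T := by
    intro j
    rw [Xloc, Finsupp.lsum_apply]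
    rfl
  simp only [h1]
  rw [Finsupp.sum, Finset.sum_comm]
  apply Finset.sum_congr rfl
  intro T _
  rw [XaT_eq, Finset.smul_sum]

/-- the span of basis vectors indexed by lower-set tuples -/
noncomputable def NN (P : Type) [Fintype P] [PartialOrder P] [DecidableEq P] (m : ℕ) :
    Submodule ℚ ((Fin m → Finset P) →₀ ℚ) :=
  Submodule.span ℚ {v | ∃ T : Fin m → Finset P,
    (∀ j, IsLowerSet ((T j : Finset P) : Set P)) ∧ v = Finsupp.single T 1}

lemma single_mem_NN {T : Fin m → Finset P} (hT : ∀ j, IsLowerSet ((T j : Finset P) : Set P)) :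
    Finsupp.single T (1 : ℚ) ∈ NN P m :=
  Submodule.subset_span ⟨T, hT, rfl⟩

lemma wv_mem_NN {a : Γ} {j : Fin m} {T : Fin m → Finset P}
    (hT : ∀ j, IsLowerSet ((T j : Finset P) : Set P)) : wv κ a j T ∈ NN P m := by
  apply Submodule.sum_mem
  intro J hJ
  rw [mem_addSet] at hJ
  obtain ⟨x, hx, rfl⟩ := hJ
  apply single_mem_NN
  intro j'
  by_cases h : j' = j
  · subst h; rw [Function.update_self]; exact hx.2.2
  · rw [Function.update_of_ne h]; exact hT j'

lemma Xloc_pres (a : Γ) (j : Fin m) : ∀ v ∈ NN P m, Xloc κ a j v ∈ NN P m := by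
  intro v hv
  induction hv using Submodule.span_induction with
  | mem x h =>
    obtain ⟨T, hT, rfl⟩ := h
    rw [Xloc_single]
    exact wv_mem_NN κ hT
  | zero => rw [map_zero]; exact Submodule.zero_mem _
  | add x y hx hy ihx ihy => rw [map_add]; exact Submodule.add_mem _ ihx ihy
  | smul c x hx ihx => rw [map_smul]; exact Submodule.smul_mem _ _ ihx

lemma Xfull_pres (a : Γ) : ∀ v ∈ NN P m, Xfull κ a v ∈ NN P m := by
  intro v hv
  rw [Xfull, LinearMap.sum_apply]
  exact Submodule.sum_mem _ (fun j _ => Xloc_pres κ a j v hv)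

/-- restricted single-coordinate operator -/
noncomputable def Eloc (a : Γ) (j : Fin m) : Module.End ℚ (NN P m) :=
  (Xloc κ a j).restrict (Xloc_pres κ a j)

lemma Eloc_coe (a : Γ) (j : Fin m) (x : NN P m) :
    ((Eloc κ a j x : NN P m) : (Fin m → Finset P) →₀ ℚ) = Xloc κ a j x :=
  rfl

/-- extensionality on the spanning set -/
lemma end_ext {F G' : Module.End ℚ (NN P m)}
    (h : ∀ (T : Fin m → Finset P) (hT : ∀ j, IsLowerSet ((T j : Finset P) : Set P)),
      F ⟨Finsupp.single T 1, single_mem_NN hT⟩ = G' ⟨Finsupp.single T 1, single_mem_NN hT⟩) :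
    F = G' := by
  refine LinearMap.ext fun x => ?_
  obtain ⟨v, hv⟩ := x
  induction hv using Submodule.span_induction with
  | mem x hx =>
    obtain ⟨T, hT, rfl⟩ := hx
    exact h T hT
  | zero =>
    have h0 : (⟨0, Submodule.zero_mem _⟩ : NN P m) = 0 := rfl
    rw [h0, map_zero, map_zero]
  | add x y hx hy ihx ihy =>
    have hadd : (⟨x + y, Submodule.add_mem _ hx hy⟩ : NN P m) = ⟨x, hx⟩ + ⟨y, hy⟩ := rfl
    rw [hadd, map_add, map_add, ihx, ihy]
  | smul c x hx ihx =>
    have hs : (⟨c • x, Submodule.smul_mem _ c hx⟩ : NN P m) = c • (⟨x, hx⟩ : NN P m) := rfl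
    rw [hs, map_smul, map_smul, ihx]

end Op


section Rel

variable {P Γ : Type} [Fintype P] [PartialOrder P] [DecidableEq P]
  (G : SimpleGraph Γ) (κ : P → Γ) {m : ℕ}

variable (hEC : ∀ x y : P, κ x = κ y → x ≤ y ∨ y ≤ x)
  (hNA : ∀ x y : P, x ⋖ y → G.Adj (κ x) (κ y))
  (hICE2 : ∀ x y : P, κ x = κ y → x < y →
      (∀ z : P, κ z = κ x → ¬ (x < z ∧ z < y)) →
      (Finset.univ.filter (fun z : P => x < z ∧ z < y ∧ G.Adj (κ z) (κ x))).card = 2)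

lemma Xloc_comm (a a' : Γ) {j j' : Fin m} (h : j ≠ j') (T : Fin m → Finset P) :
    Xloc κ a j (Xloc κ a' j' (Finsupp.single T 1))
      = Xloc κ a' j' (Xloc κ a j (Finsupp.single T 1)) := by
  rw [Xloc_single, Xloc_single, wv, wv, map_sum, map_sum]
  simp only [Xloc_single]
  have e1 : ∀ J' ∈ addSet κ a' (T j'), wv κ a j (Function.update T j' J')
      = ∑ J ∈ addSet κ a (T j),
          Finsupp.single (Function.update (Function.update T j' J') j J) (1 : ℚ) := by
    intro J' _
    rw [wv, Function.update_of_ne h J' T]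
  have e2 : ∀ J ∈ addSet κ a (T j), wv κ a' j' (Function.update T j J)
      = ∑ J' ∈ addSet κ a' (T j'),
          Finsupp.single (Function.update (Function.update T j J) j' J') (1 : ℚ) := by
    intro J _
    rw [wv, Function.update_of_ne h.symm J T]
  rw [Finset.sum_congr rfl e1, Finset.sum_congr rfl e2, Finset.sum_comm]
  apply Finset.sum_congr rfl
  intro J _
  apply Finset.sum_congr rfl
  intro J' _
  rw [Function.update_comm h.symm]

include hEC hNA in
lemma Xloc_sq (a : Γ) (j : Fin m) (T : Fin m → Finset P)
    (hT : ∀ j, IsLowerSet ((T j : Finset P) : Set P)) :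
    Xloc κ a j (Xloc κ a j (Finsupp.single T 1)) = 0 := by
  rw [Xloc_single, wv, map_sum]
  apply Finset.sum_eq_zero
  intro J hJ
  rw [mem_addSet] at hJ
  obtain ⟨x, hx, rfl⟩ := hJ
  have hempty : addSet κ a (insert x (T j)) = ∅ := by
    rw [Finset.eq_empty_iff_forall_notMem]
    intro J' hJ'
    rw [mem_addSet] at hJ'
    obtain ⟨y, hy, _⟩ := hJ'
    exact no_double G κ hEC hNA (hT j) hx hy
  rw [Xloc_single, wv, Function.update_self, hempty, Finset.sum_empty]

include hEC hNA hICE2 in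
lemma Xloc_triple {a a' : Γ} (haa : a ≠ a') (j : Fin m) (T : Fin m → Finset P)
    (hT : ∀ j, IsLowerSet ((T j : Finset P) : Set P)) :
    Xloc κ a j (Xloc κ a' j (Xloc κ a j (Finsupp.single T 1))) = 0 := by
  rw [Xloc_single, wv, map_sum, map_sum]
  apply Finset.sum_eq_zero
  intro J1 hJ1
  rw [mem_addSet] at hJ1
  obtain ⟨x, hx, rfl⟩ := hJ1
  rw [Xloc_single, wv, Function.update_self, map_sum]
  apply Finset.sum_eq_zero
  intro J2 hJ2
  rw [mem_addSet] at hJ2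
  obtain ⟨z, hz, rfl⟩ := hJ2
  rw [Function.update_idem, Xloc_single, wv, Function.update_self]
  have hempty : addSet κ a (insert z (insert x (T j))) = ∅ := by
    rw [Finset.eq_empty_iff_forall_notMem]
    intro J' hJ'
    rw [mem_addSet] at hJ'
    obtain ⟨y, hy, _⟩ := hJ'
    exact no_triple G κ hEC hNA hICE2 haa (hT j) hx hz hy
  rw [hempty, Finset.sum_empty]

-- End-level relations

lemma Eloc_comm (a a' : Γ) {j j' : Fin m} (h : j ≠ j') :
    Eloc κ a j * Eloc κ a' j' = Eloc κ a' j' * Eloc κ a j := by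
  apply end_ext
  intro T hT
  apply Subtype.ext
  simp only [Module.End.mul_apply]
  rw [Eloc_coe, Eloc_coe, Eloc_coe, Eloc_coe]
  exact Xloc_comm κ a a' h T

include hEC hNA in
lemma Eloc_sq (a : Γ) (j : Fin m) : Eloc (m := m) κ a j * Eloc κ a j = 0 := by
  apply end_ext
  intro T hT
  apply Subtype.ext
  simp only [Module.End.mul_apply, LinearMap.zero_apply, ZeroMemClass.coe_zero]
  rw [Eloc_coe, Eloc_coe]
  exact Xloc_sq G κ hEC hNA a j T hT

include hEC hNA hICE2 in
lemma Eloc_triple {a a' : Γ} (haa : a ≠ a') (j : Fin m) :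
    Eloc (m := m) κ a j * Eloc κ a' j * Eloc κ a j = 0 := by
  apply end_ext
  intro T hT
  apply Subtype.ext
  simp only [Module.End.mul_apply, LinearMap.zero_apply, ZeroMemClass.coe_zero]
  rw [Eloc_coe, Eloc_coe, Eloc_coe]
  exact Xloc_triple G κ hEC hNA hICE2 haa j T hT

lemma restrict_sum (a : Γ) :
    (Xfull κ a (m := m)).restrict (Xfull_pres κ a) = ∑ j, Eloc κ a j := by
  apply LinearMap.ext
  intro x
  apply Subtype.ext
  rw [LinearMap.restrict_coe_apply]
  rw [Xfull, LinearMap.sum_apply, LinearMap.sum_apply]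
  rw [AddSubmonoidClass.coe_finset_sum]
  apply Finset.sum_congr rfl
  intro j _
  rw [Eloc_coe]

end Rel

section Master

variable {R : Type*} [Ring R] [Algebra ℚ R] {ι : Type*} [Fintype ι]

lemma master (β γ : ι → R)
    (hbb : ∀ i j : ι, i ≠ j → β i * β j = β j * β i)
    (hcc : ∀ i j : ι, i ≠ j → γ i * γ j = γ j * γ i)
    (hbg : ∀ i j : ι, i ≠ j → β i * γ j = γ j * β i)
    (hb2 : ∀ j, β j * β j = 0)
    (hc2 : ∀ j, γ j * γ j = 0)
    (hbcb : ∀ j, β j * γ j * β j = 0)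
    (hcbc : ∀ j, γ j * β j * γ j = 0)
    (p q r : ℕ) (hpr : p ≤ r) :
    ((q.factorial * p.factorial * r.factorial : ℕ) : ℚ)⁻¹ •
        ((∑ j, γ j) ^ q * (∑ j, β j) ^ p * (∑ j, γ j) ^ r)
      = ∑ k ∈ Finset.range (min p q + 1), ((q + r - p).choose (q - k) : ℚ) •
          ((((p - k).factorial * (q + r).factorial * k.factorial : ℕ) : ℚ)⁻¹ •
            ((∑ j, β j) ^ (p - k) * (∑ j, γ j) ^ (q + r) * (∑ j, β j) ^ k)) := by
  set B := ∑ j, β j with hBdef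
  set C := ∑ j, γ j with hCdef
  set Z := B * C - C * B with hZdef
  set D : ι → R := fun j => β j * γ j - γ j * β j with hDdef
  have hD_beta : ∀ i j : ι, D j * β i = β i * D j := by
    intro i j
    by_cases hij : i = j
    · subst hij
      have t1 : D i * β i = 0 := by
        rw [hDdef]
        dsimp only
        rw [sub_mul, hbcb i, mul_assoc, hb2 i, mul_zero, sub_zero]
      have t2 : β i * D i = 0 := by
        rw [hDdef]
        dsimp only
        rw [mul_sub, ← mul_assoc, ← mul_assoc, hb2 i, zero_mul, hbcb i, sub_zero]
      rw [t1, t2]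
    · have c1 : γ j * β i = β i * γ j := (hbg i j (fun hh => hij hh)).symm
      have c2 : β j * β i = β i * β j := hbb j i (fun hh => hij hh.symm)
      have h1 : β j * γ j * β i = β i * (β j * γ j) := by
        rw [mul_assoc, c1, ← mul_assoc, c2, mul_assoc]
      have h2 : γ j * β j * β i = β i * (γ j * β j) := by
        rw [mul_assoc, c2, ← mul_assoc, c1, mul_assoc]
      rw [hDdef]
      dsimp only
      rw [sub_mul, mul_sub, h1, h2]
  have hD_gamma : ∀ i j : ι, D j * γ i = γ i * D j := by
    intro i j
    by_cases hij : i = j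
    · subst hij
      have t1 : D i * γ i = 0 := by
        rw [hDdef]
        dsimp only
        rw [sub_mul, mul_assoc, hc2 i, mul_zero, hcbc i, zero_sub, neg_zero]
      have t2 : γ i * D i = 0 := by
        rw [hDdef]
        dsimp only
        rw [mul_sub, ← mul_assoc, hcbc i, ← mul_assoc, hc2 i, zero_mul, sub_zero]
      rw [t1, t2]
    · have c1 : γ j * γ i = γ i * γ j := hcc j i (fun hh => hij hh.symm)
      have c2 : β j * γ i = γ i * β j := hbg j i (fun hh => hij hh.symm)
      have h1 : β j * γ j * γ i = γ i * (β j * γ j) := by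
        rw [mul_assoc, c1, ← mul_assoc, c2, mul_assoc]
      have h2 : γ j * β j * γ i = γ i * (γ j * β j) := by
        rw [mul_assoc, c2, ← mul_assoc, c1, mul_assoc]
      rw [hDdef]
      dsimp only
      rw [sub_mul, mul_sub, h1, h2]
  have hZsum : Z = ∑ j, D j := by
    rw [hZdef, hBdef, hCdef, Finset.sum_mul_sum, Finset.sum_mul_sum]
    rw [Finset.sum_comm (s := Finset.univ) (t := Finset.univ)
      (f := fun i j => γ i * β j)]
    rw [← Finset.sum_sub_distrib]
    apply Finset.sum_congr rfl
    intro i _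
    rw [← Finset.sum_sub_distrib]
    apply Finset.sum_eq_single i
    · intro j _ hji
      rw [hbg i j (fun hh => hji hh.symm), sub_self]
    · intro hi; exact absurd (Finset.mem_univ i) hi
  have hZB : Z * B = B * Z := by
    rw [hZsum, hBdef, Finset.sum_mul, Finset.mul_sum]
    apply Finset.sum_congr rfl
    intro j _
    rw [Finset.mul_sum, Finset.sum_mul]
    apply Finset.sum_congr rfl
    intro i _
    exact hD_beta i j
  have hZC : Z * C = C * Z := by
    rw [hZsum, hCdef, Finset.sum_mul, Finset.mul_sum]
    apply Finset.sum_congr rfl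
    intro j _
    rw [Finset.mul_sum, Finset.sum_mul]
    apply Finset.sum_congr rfl
    intro i _
    exact hD_gamma i j
  clear_value B C Z
  clear hD_beta hD_gamma hZsum hDdef hBdef hCdef
  -- S1
  have hS1 : C ^ q * B ^ p * C ^ r = ∑ t ∈ Finset.range (q + 1),
      ((-1 : ℚ) ^ t * (q.choose t : ℚ) * (p.descFactorial t : ℚ)) •
        (B ^ (p - t) * C ^ (q + r - t) * Z ^ t) := by
    rw [CLpow B C Z hZdef hZB hZC p q, Finset.sum_mul]
    apply Finset.sum_congr rfl
    intro t ht
    rw [Finset.mem_range] at ht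
    rw [smul_mul_assoc]
    congr 1
    have hcom : Z ^ t * C ^ r = C ^ r * Z ^ t := Commute.pow_pow hZC t r
    calc B ^ (p-t) * C ^ (q-t) * Z ^ t * C ^ r
        = B ^ (p-t) * C ^ (q-t) * (Z ^ t * C ^ r) := by rw [mul_assoc]
      _ = B ^ (p-t) * C ^ (q-t) * (C ^ r * Z ^ t) := by rw [hcom]
      _ = B ^ (p-t) * (C ^ (q-t) * C ^ r) * Z ^ t := by noncomm_ring
      _ = B ^ (p-t) * C ^ (q+r-t) * Z ^ t := by
          rw [← pow_add, show q - t + r = q + r - t from by omega]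
  -- S2
  have hS2 : ∀ k ∈ Finset.range (min p q + 1), B ^ (p-k) * C ^ (q+r) * B ^ k
      = ∑ t ∈ Finset.range (k+1),
          ((-1 : ℚ) ^ t * ((q+r).choose t : ℚ) * (k.descFactorial t : ℚ)) •
            (B ^ (p-t) * C ^ (q+r-t) * Z ^ t) := by
    intro k hk
    rw [Finset.mem_range] at hk
    have hkq : k ≤ q := by omega
    have hkp : k ≤ p := by omega
    have htrim : ∑ t ∈ Finset.range (k+1),
        ((-1 : ℚ) ^ t * ((q+r).choose t : ℚ) * (k.descFactorial t : ℚ)) •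
          (B ^ (k - t) * C ^ (q + r - t) * Z ^ t)
        = ∑ t ∈ Finset.range (q+r+1),
        ((-1 : ℚ) ^ t * ((q+r).choose t : ℚ) * (k.descFactorial t : ℚ)) •
          (B ^ (k - t) * C ^ (q + r - t) * Z ^ t) := by
      apply Finset.sum_subset (Finset.range_subset_range.mpr (show k+1 ≤ q+r+1 by omega))
      intro t ht ht'
      rw [Finset.mem_range] at ht ht'
      have hd : k.descFactorial t = 0 := Nat.descFactorial_eq_zero_iff_lt.mpr (by omega)
      rw [hd]
      push_cast
      rw [mul_zero, zero_smul]
    rw [mul_assoc, CLpow B C Z hZdef hZB hZC k (q+r), ← htrim, Finset.mul_sum]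
    apply Finset.sum_congr rfl
    intro t ht
    rw [Finset.mem_range] at ht
    rw [mul_smul_comm]
    congr 1
    calc B^(p-k) * (B^(k-t) * C^(q+r-t) * Z^t)
        = (B^(p-k) * B^(k-t)) * C^(q+r-t) * Z^t := by noncomm_ring
      _ = B^(p-t) * C^(q+r-t) * Z^t := by
          rw [← pow_add, show p-k+(k-t) = p - t from by omega]
  -- assemble
  rw [hS1, Finset.smul_sum]
  have hRHS : ∑ k ∈ Finset.range (min p q + 1), ((q + r - p).choose (q - k) : ℚ) •
        ((((p - k).factorial * (q + r).factorial * k.factorial : ℕ) : ℚ)⁻¹ •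
          (B ^ (p-k) * C ^ (q+r) * B ^ k))
      = ∑ t ∈ Finset.range (min p q + 1),
          (∑ k ∈ Finset.Icc t (min p q), ((q + r - p).choose (q - k) : ℚ) *
            ((((p - k).factorial * (q + r).factorial * k.factorial : ℕ) : ℚ)⁻¹ *
              ((-1 : ℚ) ^ t * ((q+r).choose t : ℚ) * (k.descFactorial t : ℚ)))) •
            (B ^ (p-t) * C ^ (q+r-t) * Z ^ t) := by
    calc ∑ k ∈ Finset.range (min p q + 1), ((q + r - p).choose (q - k) : ℚ) •
          ((((p - k).factorial * (q + r).factorial * k.factorial : ℕ) : ℚ)⁻¹ •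
            (B ^ (p-k) * C ^ (q+r) * B ^ k))
        = ∑ k ∈ Finset.range (min p q + 1), ∑ t ∈ Finset.range (k+1),
            (((q + r - p).choose (q - k) : ℚ) *
              ((((p - k).factorial * (q + r).factorial * k.factorial : ℕ) : ℚ)⁻¹ *
                ((-1 : ℚ) ^ t * ((q+r).choose t : ℚ) * (k.descFactorial t : ℚ)))) •
              (B ^ (p-t) * C ^ (q+r-t) * Z ^ t) := by
          apply Finset.sum_congr rfl
          intro k hk
          rw [hS2 k hk, Finset.smul_sum, Finset.smul_sum]
          apply Finset.sum_congr rfl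
          intro t _
          rw [smul_smul, smul_smul, mul_assoc]
      _ = _ := by
          rw [sum_triangle (min p q) (fun k t =>
            (((q + r - p).choose (q - k) : ℚ) *
              ((((p - k).factorial * (q + r).factorial * k.factorial : ℕ) : ℚ)⁻¹ *
                ((-1 : ℚ) ^ t * ((q+r).choose t : ℚ) * (k.descFactorial t : ℚ)))) •
              (B ^ (p-t) * C ^ (q+r-t) * Z ^ t))]
          apply Finset.sum_congr rfl
          intro t _
          rw [Finset.sum_smul]
  rw [hRHS]
  have htrim2 : ∑ t ∈ Finset.range (min p q + 1),
      ((q.factorial * p.factorial * r.factorial : ℕ) : ℚ)⁻¹ •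
        ((-1 : ℚ) ^ t * (q.choose t : ℚ) * (p.descFactorial t : ℚ)) •
          (B ^ (p - t) * C ^ (q + r - t) * Z ^ t)
      = ∑ t ∈ Finset.range (q + 1),
      ((q.factorial * p.factorial * r.factorial : ℕ) : ℚ)⁻¹ •
        ((-1 : ℚ) ^ t * (q.choose t : ℚ) * (p.descFactorial t : ℚ)) •
          (B ^ (p - t) * C ^ (q + r - t) * Z ^ t) := by
    apply Finset.sum_subset (Finset.range_subset_range.mpr (show min p q + 1 ≤ q + 1 by omega))
    intro t ht ht'
    rw [Finset.mem_range] at ht ht'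
    have hd : p.descFactorial t = 0 := Nat.descFactorial_eq_zero_iff_lt.mpr (by omega)
    rw [hd]
    push_cast
    rw [mul_zero, zero_smul, smul_zero]
  rw [← htrim2]
  apply Finset.sum_congr rfl
  intro t ht
  rw [Finset.mem_range] at ht
  have htp : t ≤ p := by omega
  have htq : t ≤ q := by omega
  rw [smul_smul]
  congr 1
  have hsc := scalarId p q r t hpr htp htq
  calc ((q.factorial * p.factorial * r.factorial : ℕ) : ℚ)⁻¹ *
        ((-1 : ℚ) ^ t * (q.choose t : ℚ) * (p.descFactorial t : ℚ))
      = (-1 : ℚ) ^ t * (((q.factorial * p.factorial * r.factorial : ℕ) : ℚ)⁻¹ *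
          ((q.choose t : ℚ) * (p.descFactorial t : ℚ))) := by ring
    _ = (-1 : ℚ) ^ t * ∑ k ∈ Finset.Icc t (min p q), ((q + r - p).choose (q - k) : ℚ) *
          ((((p - k).factorial * (q + r).factorial * k.factorial : ℕ) : ℚ)⁻¹ *
            (((q + r).choose t : ℚ) * (k.descFactorial t : ℚ))) := by rw [hsc]
    _ = _ := by
        rw [Finset.mul_sum]
        apply Finset.sum_congr rfl
        intro k _
        ring

end Master


section Main

variable {P Γ : Type} [Fintype P] [PartialOrder P] [DecidableEq P]
  (G : SimpleGraph Γ) (κ : P → Γ) {m : ℕ}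

/-- Proposition 5.6: for a finite `Γ`-colored poset satisfying EC, NA, AC, and ICE2,
distinct colors `b, c`, `m ≥ 1`, and `p, q, r ≥ 0` with `r ≥ p`, the operator identity
`⟨c^q⟩∘⟨b^p⟩∘⟨c^r⟩ = ∑_{k=0}^{min(p,q)} C(q+r-p, q-k) • ⟨b^{p-k}⟩∘⟨c^{q+r}⟩∘⟨b^k⟩`
holds on `m`-tuples of order ideals of `P`. -/
theorem stmt17 (P Γ : Type) [Fintype P] [PartialOrder P] [DecidableEq P] [Nonempty P]
    (G : SimpleGraph Γ) (κ : P → Γ) (hsurj : Function.Surjective κ)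
    (hEC : ∀ x y : P, κ x = κ y → x ≤ y ∨ y ≤ x)
    (hNA : ∀ x y : P, x ⋖ y → G.Adj (κ x) (κ y))
    (hAC : ∀ x y : P, G.Adj (κ x) (κ y) → x ≤ y ∨ y ≤ x)
    (hICE2 : ∀ x y : P, κ x = κ y → x < y →
      (∀ z : P, κ z = κ x → ¬ (x < z ∧ z < y)) →
      (Finset.univ.filter (fun z : P => x < z ∧ z < y ∧ G.Adj (κ z) (κ x))).card = 2)
    (b c : Γ) (hbc : b ≠ c) (m : ℕ) (hm : 1 ≤ m) (p q r : ℕ) (hrp : p ≤ r) :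
    ∀ T : Fin m → Finset P, (∀ j, IsLowerSet (↑(T j) : Set P)) →
      opPowT κ c q (opPowT κ b p (opPowT κ c r (Finsupp.single T 1))) =
      ∑ k ∈ Finset.range (min p q + 1), ((q + r - p).choose (q - k) : ℚ) •
        opPowT κ b (p - k) (opPowT κ c (q + r) (opPowT κ b k (Finsupp.single T 1))) := by
  intro T hT
  set x0 : NN P m := ⟨Finsupp.single T 1, single_mem_NN hT⟩ with hx0
  have hval : ∀ (a : Γ) (k : ℕ) (x : NN P m),
      ((Xfull κ a) ^ k) (x : (Fin m → Finset P) →₀ ℚ)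
        = (((((Xfull κ a).restrict (Xfull_pres κ a) : Module.End ℚ (NN P m))) ^ k) x : NN P m) := by
    intro a k x
    rw [Module.End.pow_restrict, LinearMap.restrict_coe_apply]
  have hop : ∀ (a : Γ) (k : ℕ) (v : (Fin m → Finset P) →₀ ℚ),
      opPowT κ a k v = (k.factorial : ℚ)⁻¹ • ((Xfull κ a) ^ k) v := by
    intro a k v
    rw [opPowT]
    congr 1
    rw [show XvT κ a = ⇑(Xfull κ a (m := m)) from funext (XvT_eq κ a)]
    exact (Module.End.pow_apply _ _ _).symm
  have h3 : ∀ (a1 a2 a3 : Γ) (k1 k2 k3 : ℕ),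
      opPowT κ a1 k1 (opPowT κ a2 k2 (opPowT κ a3 k3 (Finsupp.single T 1)))
      = ((k1.factorial * k2.factorial * k3.factorial : ℕ) : ℚ)⁻¹ •
          (((((Xfull κ a1).restrict (Xfull_pres κ a1) : Module.End ℚ (NN P m)) ^ k1 *
            ((Xfull κ a2).restrict (Xfull_pres κ a2) : Module.End ℚ (NN P m)) ^ k2 *
            ((Xfull κ a3).restrict (Xfull_pres κ a3) : Module.End ℚ (NN P m)) ^ k3) x0 : NN P m) :
            (Fin m → Finset P) →₀ ℚ) := by
    intro a1 a2 a3 k1 k2 k3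
    have hvec : ((Xfull κ a1) ^ k1) (((Xfull κ a2) ^ k2) (((Xfull κ a3) ^ k3)
        (Finsupp.single T 1)))
        = (((((Xfull κ a1).restrict (Xfull_pres κ a1) : Module.End ℚ (NN P m)) ^ k1 *
            ((Xfull κ a2).restrict (Xfull_pres κ a2) : Module.End ℚ (NN P m)) ^ k2 *
            ((Xfull κ a3).restrict (Xfull_pres κ a3) : Module.End ℚ (NN P m)) ^ k3) x0 : NN P m) :
            (Fin m → Finset P) →₀ ℚ) := by
      rw [Module.End.mul_apply, Module.End.mul_apply, ← hval a1, ← hval a2, ← hval a3]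
    rw [hop a3, hop a2, map_smul, hop a1, map_smul, map_smul]
    rw [hvec, smul_smul, smul_smul]
    congr 1
    push_cast
    rw [mul_inv, mul_inv]
  rw [h3 c b c q p r]
  have hRHSeq : ∑ k ∈ Finset.range (min p q + 1), ((q + r - p).choose (q - k) : ℚ) •
        opPowT κ b (p - k) (opPowT κ c (q + r) (opPowT κ b k (Finsupp.single T 1)))
      = ∑ k ∈ Finset.range (min p q + 1), ((q + r - p).choose (q - k) : ℚ) •
          ((((p - k).factorial * (q + r).factorial * k.factorial : ℕ) : ℚ)⁻¹ •
            (((((Xfull κ b).restrict (Xfull_pres κ b) : Module.End ℚ (NN P m)) ^ (p - k) *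
              ((Xfull κ c).restrict (Xfull_pres κ c) : Module.End ℚ (NN P m)) ^ (q + r) *
              ((Xfull κ b).restrict (Xfull_pres κ b) : Module.End ℚ (NN P m)) ^ k) x0 : NN P m) :
              (Fin m → Finset P) →₀ ℚ)) := by
    apply Finset.sum_congr rfl
    intro k _
    rw [h3 b c b (p - k) (q + r) k]
  rw [hRHSeq]
  -- relations for master
  have hbb : ∀ i j : Fin m, i ≠ j → Eloc κ b i * Eloc κ b j = Eloc κ b j * Eloc κ b i :=
    fun i j h => Eloc_comm κ b b h
  have hcc : ∀ i j : Fin m, i ≠ j → Eloc κ c i * Eloc κ c j = Eloc κ c j * Eloc κ c i :=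
    fun i j h => Eloc_comm κ c c h
  have hbg : ∀ i j : Fin m, i ≠ j → Eloc κ b i * Eloc κ c j = Eloc κ c j * Eloc κ b i :=
    fun i j h => Eloc_comm κ b c h
  have hb2 : ∀ j : Fin m, Eloc κ b j * Eloc κ b j = 0 := fun j => Eloc_sq G κ hEC hNA b j
  have hc2 : ∀ j : Fin m, Eloc κ c j * Eloc κ c j = 0 := fun j => Eloc_sq G κ hEC hNA c j
  have hbcb : ∀ j : Fin m, Eloc κ b j * Eloc κ c j * Eloc κ b j = 0 :=
    fun j => Eloc_triple G κ hEC hNA hICE2 hbc j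
  have hcbc : ∀ j : Fin m, Eloc κ c j * Eloc κ b j * Eloc κ c j = 0 :=
    fun j => Eloc_triple G κ hEC hNA hICE2 hbc.symm j
  have hM := master (R := Module.End ℚ (NN P m)) (ι := Fin m)
    (Eloc κ b) (Eloc κ c) hbb hcc hbg hb2 hc2 hbcb hcbc p q r hrp
  rw [← restrict_sum κ b, ← restrict_sum κ c] at hM
  have happ := congrArg
    (fun F : Module.End ℚ (NN P m) => ((F x0 : NN P m) : (Fin m → Finset P) →₀ ℚ)) hM
  simp only [LinearMap.smul_apply, SetLike.val_smul, LinearMap.sum_apply,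
    AddSubmonoidClass.coe_finset_sum] at happ
  exact happ

end Main
end
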